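/- (Explained part under Jann's pooled reference in the linear model.) In the linear model, let π = P(D = 1) and define the reference outcome Y(3) = π·Y(1) + (1 − π)·Y(0). Then the explained part Δ_X³ = E[Y(3) | D = 1] − E[Y(3) | D = 0] equals ⟨E[X | D = 1] − E[X | D = 0], β + π·δ⟩; that is, adding the group dummy in the pooled regression amounts to replacing the conditional weights p₁ by the unconditional probability π in the reference outcome. -/
import Mathlib


open MeasureTheory ProbabilityTheory

/-- `E[Z | D = d]`: the conditional mean of `Z` given group membership `D = d`,
i.e. `E[Z · 𝟙{D = d}] / P(D = d)`. -/
noncomputable def condMean {Ω : Type*} {m : MeasurableSpace Ω} (P : Measure Ω)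
    (Z : Ω → ℝ) (D : Ω → ℕ) (d : ℕ) : ℝ :=
  (∫ ω, Z ω * (if D ω = d then (1:ℝ) else 0) ∂P) / (P {ω | D ω = d}).toReal

/-- explained part under Jann's pooled reference
`Y(3) = π·Y(1) + (1 - π)·Y(0)`, `π = P(D = 1)`, in the linear model. -/
theorem stmt_18
    {Ω : Type*} [mΩ : MeasurableSpace Ω]
    (P : Measure Ω) [IsProbabilityMeasure P]
    {k : ℕ} (X : Ω → Fin k → ℝ) (hX : Measurable X)
    (hXint : ∀ i, Integrable (fun ω => X ω i) P)
    (D : Ω → ℕ) (hD : Measurable D) (hD01 : ∀ ω, D ω = 0 ∨ D ω = 1)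
    (hD1pos : 0 < P {ω | D ω = 1}) (hD1lt : P {ω | D ω = 1} < 1)
    (α γ : ℝ) (β δ : Fin k → ℝ)
    (ε : Ω → ℝ) (hεint : Integrable ε P)
    (hε : P[ε | MeasurableSpace.comap X inferInstance ⊔ MeasurableSpace.comap D inferInstance]
      =ᵐ[P] 0)
    (Y : ℕ → Ω → ℝ)
    (hY0 : ∀ ω, Y 0 ω = α + (∑ i, X ω i * β i) + ε ω)
    (hY1 : ∀ ω, Y 1 ω = α + γ + (∑ i, X ω i * (β i + δ i)) + ε ω)
    (π : ℝ) (hπ : π = (P {ω | D ω = 1}).toReal)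
    (Y3 : Ω → ℝ) (hY3 : ∀ ω, Y3 ω = π * Y 1 ω + (1 - π) * Y 0 ω) :
    condMean P Y3 D 1 - condMean P Y3 D 0
      = ∑ i, (condMean P (fun ω => X ω i) D 1 - condMean P (fun ω => X ω i) D 0)
          * (β i + π * δ i) := by
  have hY3' : ∀ ω, Y3 ω = (α + π * γ) + (∑ i, X ω i * (β i + π * δ i)) + ε ω := by
    intro ω
    have h : ∑ i, X ω i * (β i + π * δ i)
        = π * (∑ i, X ω i * (β i + δ i)) + (1 - π) * ∑ i, X ω i * β i := by
      rw [Finset.mul_sum, Finset.mul_sum, ← Finset.sum_add_distrib]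
      exact Finset.sum_congr rfl fun i _ => by ring
    rw [hY3, hY0, hY1, h]; ring
  have hm : (MeasurableSpace.comap X inferInstance ⊔ MeasurableSpace.comap D inferInstance)
      ≤ mΩ := sup_le hX.comap_le hD.comap_le
  have key : ∀ d : ℕ, P {ω | D ω = d} ≠ 0 →
      condMean P Y3 D d
        = (α + π * γ) + ∑ i, condMean P (fun ω => X ω i) D d * (β i + π * δ i) := by
    intro d hpd
    set s : Set Ω := {ω | D ω = d} with hsdef
    have hs : MeasurableSet s := hD (measurableSet_singleton d)
    have hp_ne : (P s).toReal ≠ 0 :=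
      ENNReal.toReal_ne_zero.2 ⟨hpd, measure_ne_top _ _⟩
    have hind : ∀ (Z : Ω → ℝ),
        (∫ ω, Z ω * (if D ω = d then (1:ℝ) else 0) ∂P) = ∫ ω in s, Z ω ∂P := by
      intro Z
      rw [← integral_indicator hs]
      congr 1; ext ω
      by_cases h : D ω = d <;> simp [Set.indicator, hsdef, h]
    have hsm : MeasurableSet[MeasurableSpace.comap X inferInstance
        ⊔ MeasurableSpace.comap D inferInstance] s :=
      (le_sup_right (a := MeasurableSpace.comap X inferInstance)
        (b := MeasurableSpace.comap D inferInstance)) s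
        ⟨{d}, measurableSet_singleton d, rfl⟩
    have hε0 : ∫ ω in s, ε ω ∂P = 0 := by
      rw [← setIntegral_condExp hm hεint hsm]
      calc ∫ ω in s, (P[ε|MeasurableSpace.comap X inferInstance
              ⊔ MeasurableSpace.comap D inferInstance]) ω ∂P
          = ∫ ω in s, (0 : ℝ) ∂P := integral_congr_ae (ae_restrict_of_ae hε)
        _ = 0 := by simp
    have hsum_int : Integrable (fun ω => ∑ i, X ω i * (β i + π * δ i)) (P.restrict s) :=
      integrable_finset_sum _ fun i _ => ((hXint i).restrict).mul_const _
    have hεs : Integrable ε (P.restrict s) := hεint.restrict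
    have hYint : ∫ ω in s, Y3 ω ∂P
        = (P s).toReal * (α + π * γ)
          + ∑ i, (∫ ω in s, X ω i ∂P) * (β i + π * δ i) := by
      have hfe : Y3 = fun ω => (α + π * γ) + (∑ i, X ω i * (β i + π * δ i)) + ε ω :=
        funext hY3'
      have h1 : ∫ ω in s, ((α + π * γ) + (∑ i, X ω i * (β i + π * δ i)) + ε ω) ∂P
          = (∫ ω in s, ((α + π * γ) + ∑ i, X ω i * (β i + π * δ i)) ∂P)
            + ∫ ω in s, ε ω ∂P :=
        integral_add ((integrable_const _).add hsum_int) hεs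
      have h2 : ∫ ω in s, ((α + π * γ) + ∑ i, X ω i * (β i + π * δ i)) ∂P
          = (∫ ω in s, (α + π * γ : ℝ) ∂P)
            + ∫ ω in s, ∑ i, X ω i * (β i + π * δ i) ∂P :=
        integral_add (integrable_const _) hsum_int
      rw [hfe, h1, h2, hε0, add_zero, setIntegral_const,
        integral_finset_sum _ fun i _ => ((hXint i).restrict).mul_const _]
      rw [smul_eq_mul]
      congr 1
      exact Finset.sum_congr rfl fun i _ => integral_mul_const _ _
    simp only [condMean, hind, hYint]
    rw [add_div]
    congr 1
    · rw [mul_comm, mul_div_assoc, div_self hp_ne, mul_one]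
    · rw [Finset.sum_div]
      exact Finset.sum_congr rfl fun i _ => (div_mul_eq_mul_div _ _ _).symm
  have hp1 : P {ω | D ω = 1} ≠ 0 := hD1pos.ne'
  have hp0 : P {ω | D ω = 0} ≠ 0 := by
    intro h
    have huniv : (Set.univ : Set Ω) = {ω | D ω = 0} ∪ {ω | D ω = 1} := by
      ext ω; simpa using hD01 ω
    have : (1 : ENNReal) ≤ P {ω | D ω = 1} := by
      calc (1 : ENNReal) = P Set.univ := (measure_univ).symm
        _ ≤ P {ω | D ω = 0} + P {ω | D ω = 1} := huniv ▸ measure_union_le _ _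
        _ = P {ω | D ω = 1} := by rw [h, zero_add]
    exact absurd hD1lt (not_lt.2 this)
  rw [key 1 hp1, key 0 hp0]
  rw [show (∑ i, (condMean P (fun ω => X ω i) D 1 - condMean P (fun ω => X ω i) D 0)
        * (β i + π * δ i))
      = (∑ i, condMean P (fun ω => X ω i) D 1 * (β i + π * δ i))
        - ∑ i, condMean P (fun ω => X ω i) D 0 * (β i + π * δ i) by
    rw [← Finset.sum_sub_distrib]; exact Finset.sum_congr rfl fun i _ => by ring]
  ring
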